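/- Let t ≥ 3 and let p₁ ≤ p₂ ≤ ⋯ ≤ p_t be integers with each p_i ≥ 2. Set p = lcm(p₁,…,p_t) and g = 1 + (1/2)·((t-2)·p - Σᵢ p/pᵢ). Then g < 1 if and only if (p₁,…,p_t) is of the form (2,2,n) with n ≥ 2, or equals (2,3,3), (2,3,4), or (2,3,5). -/

import Mathlib

private lemma aux_map_coe (p : ℕ) (L : List ℕ) :
    (L.map fun x => (p : ℚ) / x) = (L.map fun x : ℕ => (p : ℚ) / (x:ℚ)) := by
  induction L with
  | nil => rfl
  | cons a l ih =>
    simp only [List.map_cons] at ih ⊢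
    rw [show ((a :: l : List ℕ) : List ℚ) = (a:ℚ) :: (l : List ℚ) from rfl]
    simp_all

private lemma aux_lcm_pos : ∀ (M : List ℕ), (∀ x ∈ M, 2 ≤ x) → 0 < M.foldr Nat.lcm 1 := by
  intro M
  induction M with
  | nil => simp
  | cons a l ih =>
    intro h
    have ha : 2 ≤ a := h a List.mem_cons_self
    have hl := ih (fun x hx => h x (List.mem_cons_of_mem a hx))
    exact Nat.lcm_pos (by omega) hl

private lemma aux_sum_factor (q : ℚ) : ∀ (M : List ℕ),
    ((M.map fun x : ℕ => q / (x:ℚ))).sum = q * (M.map fun x : ℕ => ((x:ℚ))⁻¹).sum := by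
  intro M
  induction M with
  | nil => simp
  | cons a l ih =>
    rw [List.map_cons, List.map_cons, List.sum_cons, List.sum_cons, ih, mul_add,
      div_eq_mul_inv]

theorem stmt_10 (L : List ℕ) (hlen : 3 ≤ L.length)
    (hsort : L.Pairwise (· ≤ ·)) (h2 : ∀ x ∈ L, 2 ≤ x)
    (p : ℕ) (hp : p = L.foldr Nat.lcm 1)
    (g : ℚ)
    (hg : g = 1 + (1 / 2) * (((L.length : ℚ) - 2) * p - (L.map fun x => (p : ℚ) / x).sum)) :
    g < 1 ↔ (∃ n : ℕ, 2 ≤ n ∧ L = [2, 2, n]) ∨ L = [2, 3, 3] ∨ L = [2, 3, 4] ∨ L = [2, 3, 5] := by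
  rw [aux_map_coe] at hg
  have hppos : 0 < p := hp ▸ aux_lcm_pos L h2
  have hpq : (0:ℚ) < (p:ℚ) := by exact_mod_cast hppos
  have hS := aux_sum_factor (p:ℚ) L
  have key : g < 1 ↔ ((L.length : ℚ) - 2) < (L.map fun x : ℕ => ((x:ℚ))⁻¹).sum := by
    rw [hg, hS]
    constructor
    · intro h
      have h' : ((L.length : ℚ) - 2) * p < (p:ℚ) * (L.map fun x : ℕ => ((x:ℚ))⁻¹).sum := by
        linarith
      rw [mul_comm] at h'
      exact lt_of_mul_lt_mul_left h' (le_of_lt hpq)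
    · intro h
      have h' : (p:ℚ) * ((L.length : ℚ) - 2) < (p:ℚ) * (L.map fun x : ℕ => ((x:ℚ))⁻¹).sum :=
        (mul_lt_mul_iff_right₀ hpq).mpr h
      rw [mul_comm (p:ℚ)] at h'
      linarith
  rw [key]
  constructor
  · intro h
    have hbound : (L.map fun x : ℕ => ((x:ℚ))⁻¹).sum ≤ (L.length : ℚ) * (1/2) := by
      have hle := List.sum_le_card_nsmul (L.map fun x : ℕ => ((x:ℚ))⁻¹) (1/2 : ℚ) (by
        intro y hy
        simp only [List.mem_map] at hy
        obtain ⟨x, hx, rfl⟩ := hy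
        have h2x : (2:ℚ) ≤ x := by exact_mod_cast h2 x hx
        calc (x:ℚ)⁻¹ ≤ (2:ℚ)⁻¹ := inv_anti₀ (by norm_num) h2x
          _ = 1/2 := by norm_num)
      rw [List.length_map] at hle
      simpa [nsmul_eq_mul] using hle
    have hlt : (L.length : ℚ) < 4 := by linarith
    have hlen4 : L.length < 4 := by exact_mod_cast hlt
    have hlen3 : L.length = 3 := by omega
    obtain ⟨a, b, c, rfl⟩ := List.length_eq_three.mp hlen3
    simp only [List.map_cons, List.map_nil, List.sum_cons, List.sum_nil, List.length_cons,
      List.length_nil, add_zero] at h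
    have h1 : (1:ℚ) < (a:ℚ)⁻¹ + (b:ℚ)⁻¹ + (c:ℚ)⁻¹ := by push_cast at h; linarith
    have hab : a ≤ b := (List.pairwise_cons.mp hsort).1 b (by simp)
    have hbc : b ≤ c := (List.pairwise_cons.mp (List.pairwise_cons.mp hsort).2).1 c (by simp)
    have h2a : 2 ≤ a := h2 a (by simp)
    have h2c : 2 ≤ c := h2 c (by simp)
    have haq : (2:ℚ) ≤ a := by exact_mod_cast h2a
    have habq : (a:ℚ) ≤ b := by exact_mod_cast hab
    have hbcq : (b:ℚ) ≤ c := by exact_mod_cast hbc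
    have ha0 : (0:ℚ) < a := by linarith
    have hb0 : (0:ℚ) < b := by linarith
    have hc0 : (0:ℚ) < c := by linarith
    have hba : (b:ℚ)⁻¹ ≤ (a:ℚ)⁻¹ := inv_anti₀ ha0 habq
    have hcb : (c:ℚ)⁻¹ ≤ (b:ℚ)⁻¹ := inv_anti₀ hb0 hbcq
    have h3a : ((3:ℚ))⁻¹ < (a:ℚ)⁻¹ := by
      have hi3 : ((3:ℚ))⁻¹ = 1/3 := by norm_num
      linarith
    have ha3 : a < 3 := by
      have := (inv_lt_inv₀ (by norm_num) ha0).mp h3a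
      exact_mod_cast this
    have ha2 : a = 2 := by omega
    subst ha2
    push_cast at h1
    have h4b : ((4:ℚ))⁻¹ < (b:ℚ)⁻¹ := by
      have e2 : ((2:ℚ))⁻¹ = 1/2 := by norm_num
      have e4 : ((4:ℚ))⁻¹ = 1/4 := by norm_num
      linarith
    have hb4 : b < 4 := by
      have := (inv_lt_inv₀ (by norm_num) hb0).mp h4b
      exact_mod_cast this
    have hb2 : 2 ≤ b := hab
    interval_cases b
    · exact Or.inl ⟨c, h2c, rfl⟩
    · have h6c : ((6:ℚ))⁻¹ < (c:ℚ)⁻¹ := by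
        have e2 : ((2:ℚ))⁻¹ = 1/2 := by norm_num
        have e3 : ((3:ℚ))⁻¹ = 1/3 := by norm_num
        have e6 : ((6:ℚ))⁻¹ = 1/6 := by norm_num
        push_cast at h1
        linarith
      have hc6 : c < 6 := by
        have := (inv_lt_inv₀ (by norm_num) hc0).mp h6c
        exact_mod_cast this
      have hc3 : 3 ≤ c := hbc
      interval_cases c
      · exact Or.inr (Or.inl rfl)
      · exact Or.inr (Or.inr (Or.inl rfl))
      · exact Or.inr (Or.inr (Or.inr rfl))
  · rintro (⟨n, hn, rfl⟩ | rfl | rfl | rfl)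
    · have hn0 : (0:ℚ) < n := by exact_mod_cast (by omega : 0 < n)
      have hninv : (0:ℚ) < (n:ℚ)⁻¹ := by positivity
      simp only [List.map_cons, List.map_nil, List.sum_cons, List.sum_nil, List.length_cons,
        List.length_nil, add_zero]
      push_cast
      norm_num
      linarith
    · norm_num
    · norm_num
    · norm_num
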